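/- Assume the centered scatter matrix S(A) = A Q_m Aᵀ is positive definite. Then the polyhedral localization set 𝒳_d is a bounded subset of ℝⁿ. -/

import Mathlib

open Matrix
open scoped InnerProductSpace

noncomputable section

/-- Reinterpret a plain vector as a point of Euclidean space (with the ℓ² norm). -/
def toE {n : ℕ} (v : Fin n → ℝ) : EuclideanSpace ℝ (Fin n) := WithLp.toLp 2 v

/-- The all-ones m×m matrix 𝟙𝟙ᵀ. -/
def onesM (m : ℕ) : Matrix (Fin m) (Fin m) ℝ := Matrix.of fun _ _ => 1

/-- The centering projector Q_m = I_m − (1/m)𝟙𝟙ᵀ. -/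
def Qm (m : ℕ) : Matrix (Fin m) (Fin m) ℝ := 1 - (m : ℝ)⁻¹ • onesM m

/-- The i-th anchor a⁽ⁱ⁾, i.e. the i-th column of A, as a Euclidean point. -/
def colE {n m : ℕ} (A : Matrix (Fin n) (Fin m) ℝ) (i : Fin m) : EuclideanSpace ℝ (Fin n) :=
  toE fun k => A k i

/-- The vector ω ∈ ℝᵐ with entries ωᵢ = ‖a⁽ⁱ⁾‖₂². -/
def omegaV {n m : ℕ} (A : Matrix (Fin n) (Fin m) ℝ) : Fin m → ℝ := fun i => ‖colE A i‖ ^ 2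

/-- The polyhedral localization set
𝒳_d = {x : ∃ α, ξ⁻ ≤ Q_m ω − 2 Q_m Aᵀ x + α𝟙 ≤ ξ⁺}. -/
def Xd {n m : ℕ} (A : Matrix (Fin n) (Fin m) ℝ) (xim xip : Fin m → ℝ) :
    Set (EuclideanSpace ℝ (Fin n)) :=
  {x | ∃ α : ℝ,
      xim ≤ (Qm m).mulVec (omegaV A) - (2 : ℝ) • ((Qm m * Aᵀ).mulVec x) + α • (1 : Fin m → ℝ) ∧
      (Qm m).mulVec (omegaV A) - (2 : ℝ) • ((Qm m * Aᵀ).mulVec x) + α • (1 : Fin m → ℝ) ≤ xip}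

/-- The intersection ℋ of the upper-range balls: ℋ = ∩ᵢ {x : ‖x − a⁽ⁱ⁾‖₂ ≤ √ξᵢ⁺}. -/
def Hset {n m : ℕ} (A : Matrix (Fin n) (Fin m) ℝ) (xip : Fin m → ℝ) :
    Set (EuclideanSpace ℝ (Fin n)) :=
  {x | ∀ i, ‖x - colE A i‖ ≤ Real.sqrt (xip i)}

/-- Support function h_Ω(v) = sup_{x∈Ω} vᵀx. -/
def suppF {n : ℕ} (Ω : Set (EuclideanSpace ℝ (Fin n))) (v : EuclideanSpace ℝ (Fin n)) : ℝ :=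
  sSup ((fun x => ⟪v, x⟫_ℝ) '' Ω)

/-- ψ_Ω(v) = h_Ω(v) + h_Ω(−v). -/
def psiH {n : ℕ} (Ω : Set (EuclideanSpace ℝ (Fin n))) (v : EuclideanSpace ℝ (Fin n)) : ℝ :=
  suppF Ω v + suppF Ω (-v)

/-- Directional width width_v(Ω) = sup_{x∈Ω} vᵀx − inf_{x∈Ω} vᵀx. -/
def dwidth {n : ℕ} (v : EuclideanSpace ℝ (Fin n)) (Ω : Set (EuclideanSpace ℝ (Fin n))) : ℝ :=
  sSup ((fun x => ⟪v, x⟫_ℝ) '' Ω) - sInf ((fun x => ⟪v, x⟫_ℝ) '' Ω)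

/-- The aggregated squared radius ρ(p)² = pᵀ(ξ⁺ − ω) + ‖Ap‖₂². -/
def rho2 {n m : ℕ} (A : Matrix (Fin n) (Fin m) ℝ) (xip : Fin m → ℝ) (p : Fin m → ℝ) : ℝ :=
  p ⬝ᵥ (xip - omegaV A) + ‖toE (A.mulVec p)‖ ^ 2

lemma Qm_idem (m : ℕ) : Qm m * Qm m = Qm m := by
  rcases eq_or_ne m 0 with h | h
  · subst h; ext i j; exact i.elim0
  · have hm : (m : ℝ) ≠ 0 := Nat.cast_ne_zero.2 h
    have hJ : onesM m * onesM m = (m : ℝ) • onesM m := by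
      ext i j
      simp [onesM, Matrix.mul_apply, Finset.sum_const, Finset.card_univ]
    have hc : (m : ℝ)⁻¹ • ((m : ℝ)⁻¹ • ((m : ℝ) • onesM m)) = (m : ℝ)⁻¹ • onesM m := by
      rw [smul_smul, smul_smul]
      congr 1
      field_simp
    simp only [Qm, sub_mul, mul_sub, one_mul, mul_one, Matrix.smul_mul, Matrix.mul_smul, hJ, hc]
    abel

lemma Qm_transpose (m : ℕ) : (Qm m)ᵀ = Qm m := by
  simp only [Qm, Matrix.transpose_sub, Matrix.transpose_one, Matrix.transpose_smul]
  congr 1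

lemma Qm_mulVec_one (m : ℕ) : (Qm m).mulVec (1 : Fin m → ℝ) = 0 := by
  funext i
  have hm : (m : ℝ) ≠ 0 := Nat.cast_ne_zero.2 i.pos.ne'
  simp [Qm, onesM, Matrix.sub_mulVec, Matrix.smul_mulVec, Matrix.one_mulVec,
    Matrix.mulVec, dotProduct, Matrix.one_apply, Finset.sum_const, Finset.card_univ, hm]

lemma Qm_mul_self_mul {n m : ℕ} (A : Matrix (Fin n) (Fin m) ℝ) :
    Qm m * (Qm m * Aᵀ) = Qm m * Aᵀ := by
  rw [← Matrix.mul_assoc, Qm_idem]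

lemma scatter_eq {n m : ℕ} (A : Matrix (Fin n) (Fin m) ℝ) :
    A * Qm m * Aᵀ = (Qm m * Aᵀ)ᵀ * (Qm m * Aᵀ) := by
  rw [Matrix.transpose_mul, Matrix.transpose_transpose, Qm_transpose]
  conv_rhs => rw [← Matrix.mul_assoc, Matrix.mul_assoc A, Qm_idem]


/-- If S(A) = A Q_m Aᵀ ≻ 0, then the polyhedral localization set 𝒳_d is a
bounded subset of ℝⁿ. -/
theorem stmt5 {n m : ℕ} (A : Matrix (Fin n) (Fin m) ℝ) (xim xip : Fin m → ℝ)
    (hpd : (A * Qm m * Aᵀ).PosDef) :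
    Bornology.IsBounded (Xd A xim xip) := by
  classical
  set M : Matrix (Fin m) (Fin n) ℝ := Qm m * Aᵀ with hM
  let f : EuclideanSpace ℝ (Fin n) →ₗ[ℝ] (Fin m → ℝ) :=
    { toFun := fun x => M.mulVec x
      map_add' := fun x y => by
        funext i
        simp [Matrix.mulVec, dotProduct, mul_add, Finset.sum_add_distrib]
      map_smul' := fun r x => by
        funext i
        simp [Matrix.mulVec, dotProduct, Finset.mul_sum, mul_left_comm] }
  have hker : LinearMap.ker f = ⊥ := by
    rw [LinearMap.ker_eq_bot]
    intro x y hxy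
    have hv : M.mulVec (x - y) = 0 := by
      have : f (x - y) = 0 := by rw [map_sub, hxy, sub_self]
      exact this
    by_contra hne
    have hne' : (x - y : Fin n → ℝ) ≠ 0 := fun h => hne (sub_eq_zero.1 ?_)
    · have hpos := hpd.dotProduct_mulVec_pos hne'
      rw [scatter_eq, ← hM, ← Matrix.mulVec_mulVec, hv, Matrix.mulVec_zero,
        dotProduct_zero] at hpos
      exact lt_irrefl _ hpos
    · exact sub_eq_zero.2 (WithLp.ofLp_injective 2 (sub_eq_zero.1 h))
  obtain ⟨K, hK, hanti⟩ := f.exists_antilipschitzWith hker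
  set c : Fin m → ℝ := (Qm m).mulVec (omegaV A) with hc
  let φ : (Fin m → ℝ) → (Fin m → ℝ) :=
    fun z => (2 : ℝ)⁻¹ • ((Qm m).mulVec c - (Qm m).mulVec z)
  have hφ : Continuous φ := by
    fun_prop
  have hB : Bornology.IsBounded (φ '' Set.Icc xim xip) :=
    ((isCompact_Icc).image hφ).isBounded
  refine (hanti.isBounded_preimage hB).subset ?_
  rintro x ⟨α, h1, h2⟩
  refine ⟨c - (2 : ℝ) • (M.mulVec x) + α • (1 : Fin m → ℝ), ⟨h1, h2⟩, ?_⟩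
  show (2 : ℝ)⁻¹ • ((Qm m).mulVec c -
      (Qm m).mulVec (c - (2 : ℝ) • (M.mulVec x) + α • (1 : Fin m → ℝ))) = M.mulVec x
  rw [Matrix.mulVec_add, Matrix.mulVec_sub, Matrix.mulVec_smul, Matrix.mulVec_smul,
    Qm_mulVec_one, hM]
  simp only [Matrix.mulVec_mulVec]
  rw [Qm_mul_self_mul]
  funext i
  simp only [Pi.smul_apply, Pi.sub_apply, Pi.add_apply, Pi.zero_apply, smul_eq_mul, mul_zero]
  ring
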